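/- For all integers p ≥ 2 and l > 1, Σ_{n=1}^∞ H_n^{(p)} / C(n+l, l) = ζ(p) + Σ_{j=1}^{l−1} (−1)^j · { C(l−1, j)·μ(p−1, j) − C(l−2, j−1)·μ(p, j) }, where μ(r, j) = Σ_{n=1}^∞ 1/(n^r (n+j)). -/

import Mathlib

open Finset Real

/-- The generalized harmonic number `H_n^{(p)} = ∑_{k=1}^n 1/k^p`. -/
noncomputable def gH (p : ℤ) (n : ℕ) : ℝ := ∑ k ∈ Finset.Icc 1 n, ((k : ℝ) ^ p)⁻¹

/-- The generalized hyperharmonic number `H_n^{(p,q)}`: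
`H_n^{(p,0)} = 1/n^p` (with `H_0^{(p,q)} = 0`) and
`H_n^{(p,q)} = ∑_{k=1}^n H_k^{(p,q-1)}` for `q ≥ 1`. -/
noncomputable def gHH (p : ℤ) : ℕ → ℕ → ℝ
  | 0, n => if n = 0 then 0 else ((n : ℝ) ^ p)⁻¹
  | q + 1, n => ∑ k ∈ Finset.Icc 1 n, gHH p q k

/-- Euler sum of generalized harmonic numbers `ζ_{H^{(p)}}(r) = ∑_{n≥1} H_n^{(p)}/n^r`. -/
noncomputable def eulerSum (p r : ℤ) : ℝ := ∑' n : ℕ+, gH p n / (n : ℝ) ^ r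

/-- Euler sum of generalized hyperharmonic numbers
`ζ_{H^{(p,q)}}(r) = ∑_{n≥1} H_n^{(p,q)}/n^r`. -/
noncomputable def eulerSumHH (p : ℤ) (q : ℕ) (r : ℤ) : ℝ := ∑' n : ℕ+, gHH p q n / (n : ℝ) ^ r

/-- Riemann zeta value at an integer argument, `ζ(s) = ∑_{n≥1} 1/n^s`. -/
noncomputable def zv (s : ℤ) : ℝ := ∑' n : ℕ+, ((n : ℝ) ^ s)⁻¹

/-- Unsigned Stirling numbers of the first kind, defined by
`x(x+1)⋯(x+q-1) = ∑_{k=0}^q [q,k] x^k`, i.e. `[n+1,k] = [n,k-1] + n·[n,k]`. -/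
def stirlingFirst : ℕ → ℕ → ℕ
  | 0, 0 => 1
  | 0, _ + 1 => 0
  | _ + 1, 0 => 0
  | n + 1, k + 1 => stirlingFirst n k + n * stirlingFirst n (k + 1)

/-- The series `μ(r,j) = ∑_{n≥1} 1/(n^r (n+j))`. -/
noncomputable def mu (r j : ℕ) : ℝ := ∑' n : ℕ+, 1 / ((n : ℝ) ^ r * ((n : ℝ) + j))

/-- `e_j(n+1, n+2, …, n+q)`: the `j`-th elementary symmetric polynomial
evaluated at the numbers `n+1, …, n+q`. -/
noncomputable def esymmVal (n q j : ℕ) : ℝ :=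
  ∑ s ∈ Finset.powersetCard j (Finset.Icc 1 q), ∏ i ∈ s, ((n : ℝ) + i)

open Filter Topology
section Aux14
private lemma sum_Icc_shift (f : ℕ → ℝ) (m : ℕ) :
    ∑ j ∈ Finset.Icc 1 m, f j = ∑ j ∈ Finset.range m, f (j + 1) := by
  induction m with
  | zero => simp
  | succ m ih =>
    rw [Finset.sum_Icc_succ_top (by omega), ih, Finset.sum_range_succ]

private lemma comb (m : ℕ) (g : ℕ → ℝ) :
    ∑ j ∈ Finset.range (m + 2), (-1 : ℝ) ^ j * ((m + 1).choose j) * g j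
      = ∑ j ∈ Finset.range (m + 1), (-1 : ℝ) ^ j * (m.choose j) * g j
        - ∑ j ∈ Finset.range (m + 1), (-1 : ℝ) ^ j * (m.choose j) * g (j + 1) := by
  have h1 : ∑ j ∈ Finset.range (m + 2), (-1 : ℝ) ^ j * ((m + 1).choose j) * g j
      = ∑ j ∈ Finset.range (m + 1), (-1 : ℝ) ^ (j+1) * ((m + 1).choose (j+1)) * g (j+1) + g 0 := by
    rw [Finset.sum_range_succ' (fun j => (-1 : ℝ) ^ j * ((m + 1).choose j) * g j) (m+1)]
    simp
  have h2 : ∀ j, ((m + 1).choose (j+1) : ℝ) = (m.choose j : ℝ) + (m.choose (j+1) : ℝ) := by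
    intro j; rw [Nat.choose_succ_succ]; push_cast; ring
  have h3 : ∑ j ∈ Finset.range (m + 1), (-1 : ℝ) ^ (j+1) * (m.choose (j+1)) * g (j+1)
      = ∑ j ∈ Finset.range (m + 1), (-1 : ℝ) ^ j * (m.choose j) * g j - g 0 := by
    have := Finset.sum_range_succ' (fun j => (-1 : ℝ) ^ j * (m.choose j) * g j) (m+1)
    rw [Finset.sum_range_succ (fun j => (-1 : ℝ) ^ j * (m.choose j) * g j) (m+1)] at this
    simp only [Nat.choose_succ_self, Nat.cast_zero, mul_zero, zero_mul, add_zero,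
      Nat.choose_zero_right, Nat.cast_one, pow_zero, mul_one, one_mul] at this
    linarith
  rw [h1]
  have : ∀ j ∈ Finset.range (m+1), (-1 : ℝ) ^ (j+1) * ((m + 1).choose (j+1)) * g (j+1)
      = (-1 : ℝ) ^ (j+1) * (m.choose j) * g (j+1) + (-1 : ℝ) ^ (j+1) * (m.choose (j+1)) * g (j+1) := by
    intro j _; rw [h2]; ring
  rw [Finset.sum_congr rfl this, Finset.sum_add_distrib, h3]
  have : ∑ j ∈ Finset.range (m+1), (-1 : ℝ) ^ (j+1) * (m.choose j) * g (j+1)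
      = - ∑ j ∈ Finset.range (m+1), (-1 : ℝ) ^ j * (m.choose j) * g (j+1) := by
    rw [← Finset.sum_neg_distrib]; apply Finset.sum_congr rfl; intro j _; ring
  rw [this]; ring

private lemma prodpos (x : ℝ) (hx : 0 < x) (t : ℕ) : 0 < ∏ i ∈ Finset.range t, (x + i) := by
  apply Finset.prod_pos; intro i _; positivity

private lemma pf (m : ℕ) : ∀ x : ℝ, 0 < x →
    (∏ i ∈ Finset.range (m + 1), (x + i))⁻¹
      = (m.factorial : ℝ)⁻¹ * ∑ j ∈ Finset.range (m + 1), (-1 : ℝ) ^ j * (m.choose j) * (x + j)⁻¹ := by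
  induction m with
  | zero => intro x hx; simp
  | succ m ih =>
    intro x hx
    have hx1 : (0:ℝ) < x + 1 := by linarith
    set A := ∏ i ∈ Finset.range (m + 1), (x + i) with hA
    set B := ∏ i ∈ Finset.range (m + 1), ((x + 1) + i) with hB
    set K := ∏ i ∈ Finset.range (m + 2), (x + i) with hK
    have hApos : 0 < A := prodpos x hx (m+1)
    have hBpos : 0 < B := prodpos (x+1) hx1 (m+1)
    have hKA : K = A * (x + (m + 1)) := by
      rw [hK, hA, Finset.prod_range_succ]; push_cast; ring
    have hKB : K = x * B := by
      rw [hK, hB, Finset.prod_range_succ' (fun i => x + i) (m+1)]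
      have : ∀ i ∈ Finset.range (m+1), (x + ((i:ℕ)+1:ℕ)) = ((x+1) + i) := by
        intro i _; push_cast; ring
      rw [Finset.prod_congr rfl this]; push_cast; ring
    have hKpos : 0 < K := by rw [hKA]; positivity
    have key : K⁻¹ = ((m:ℝ) + 1)⁻¹ * (A⁻¹ - B⁻¹) := by
      have : A⁻¹ - B⁻¹ = ((m:ℝ)+1) * K⁻¹ := by
        have e1 : A⁻¹ = (x + (m+1)) * K⁻¹ := by
          rw [hKA, mul_inv]
          field_simp
        have e2 : B⁻¹ = x * K⁻¹ := by rw [hKB, mul_inv]; field_simp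
        rw [e1, e2]; ring
      rw [this]; field_simp
    rw [key, ih x hx, ih (x+1) hx1]
    have hg : ∀ j : ℕ, ((x+1) + (j:ℝ))⁻¹ = (x + ((j+1:ℕ):ℝ))⁻¹ := by
      intro j; push_cast; ring_nf
    have : ∑ j ∈ Finset.range (m + 1), (-1 : ℝ) ^ j * (m.choose j) * ((x+1) + j)⁻¹
        = ∑ j ∈ Finset.range (m + 1), (-1 : ℝ) ^ j * (m.choose j) * (x + ((j+1:ℕ):ℝ))⁻¹ := by
      apply Finset.sum_congr rfl; intro j _; rw [hg]
    rw [this]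
    rw [show (∑ j ∈ Finset.range (m + 2), (-1 : ℝ) ^ j * ((m+1).choose j) * (x + j)⁻¹)
        = _ from comb m (fun j => (x + (j:ℕ))⁻¹)]
    have hfac : (((m+1).factorial : ℕ) : ℝ)⁻¹ = ((m:ℝ)+1)⁻¹ * ((m.factorial : ℕ):ℝ)⁻¹ := by
      rw [Nat.factorial_succ]; push_cast; rw [mul_inv]
    rw [hfac, mul_sub, mul_sub]
    push_cast
    ring

-- ℕ: C(m+t, t) * t! = (m+1)(m+2)⋯(m+t)
private lemma choose_fact (m : ℕ) : ∀ t : ℕ,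
    (m + t).choose t * t.factorial = ∏ i ∈ Finset.range t, (m + 1 + i) := by
  intro t
  induction t with
  | zero => simp
  | succ t ih =>
    rw [Finset.prod_range_succ, ← ih, Nat.factorial_succ]
    have h : (m + t + 1) * (m + t).choose t = (m + t + 1).choose (t + 1) * (t + 1) := by
      simpa using Nat.add_one_mul_choose_eq (m + t) t
    rw [show m + (t+1) = m + t + 1 from by omega]
    calc (m + t + 1).choose (t+1) * ((t+1) * t.factorial)
        = ((m + t + 1).choose (t+1) * (t+1)) * t.factorial := by ring
      _ = ((m + t + 1) * (m + t).choose t) * t.factorial := by rw [← h]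
      _ = (m + t).choose t * t.factorial * (m + 1 + t) := by ring

-- ℝ cast version: (C(m+t,t) : ℝ) * t! = ∏ (m+1+i)
private lemma choose_fact_real (m t : ℕ) :
    (((m + t).choose t : ℕ) : ℝ) * (t.factorial : ℝ) = ∏ i ∈ Finset.range t, ((m : ℝ) + 1 + i) := by
  exact_mod_cast choose_fact m t

private lemma choose_inv (m t : ℕ) :
    ((((m + t).choose t : ℕ) : ℝ))⁻¹ = (t.factorial : ℝ) * (∏ i ∈ Finset.range t, ((m : ℝ) + 1 + i))⁻¹ := by
  have hpos : (0:ℝ) < ∏ i ∈ Finset.range t, ((m : ℝ) + 1 + i) := by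
    apply Finset.prod_pos; intro i _; positivity
  have hcf := choose_fact_real m t
  have hfpos : (0:ℝ) < (t.factorial : ℝ) := by exact_mod_cast t.factorial_pos
  have hcpos : (0:ℝ) < (((m + t).choose t : ℕ) : ℝ) := by
    exact_mod_cast Nat.choose_pos (Nat.le_add_left t m)
  field_simp
  nlinarith [hcf]

-- 2 * C(n+2,2) = (n+1)(n+2)
private lemma two_choose_two : ∀ n : ℕ, 2 * (n + 2).choose 2 = (n + 1) * (n + 2)
  | 0 => rfl
  | (n+1) => by
    have h : (n + 3).choose 2 = (n+2).choose 1 + (n + 2).choose 2 := Nat.choose_succ_succ (n+2) 1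
    have ih := two_choose_two n
    have : (n+2).choose 1 = n + 2 := Nat.choose_one_right _
    calc 2 * (n + 3).choose 2 = 2 * (n+2) + 2 * ((n+2).choose 2) := by rw [h, this]; ring
      _ = 2 * (n+2) + (n+1)*(n+2) := by rw [ih]
      _ = (n + 2) * (n + 3) := by ring

private lemma choose_lb (m l : ℕ) (hl : 2 ≤ l) : (m + 1) * (m + 2) ≤ 2 * ((m + 1 + l).choose l) := by
  have h1 : (m + 1 + l).choose l = (m + 1 + l).choose (m + 1) := by
    have := Nat.choose_symm (n := m + 1 + l) (k := l) (by omega)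
    rw [show m + 1 + l - l = m + 1 by omega] at this
    omega
  have h2 : (m + 3).choose (m + 1) ≤ (m + 1 + l).choose (m + 1) :=
    Nat.choose_le_choose (m+1) (by omega)
  have h3 : (m + 3).choose (m + 1) = (m + 3).choose 2 := by
    have := Nat.choose_symm (n := m + 3) (k := 2) (by omega)
    rw [show m + 3 - 2 = m + 1 by omega] at this
    omega
  have h4 := two_choose_two (m + 1)
  rw [show m+1+2 = m+3 from by omega] at h4
  calc (m+1)*(m+2) ≤ (m+2)*(m+3) := by nlinarith
    _ = 2 * (m+3).choose 2 := h4.symm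
    _ = 2 * (m + 3).choose (m+1) := by rw [h3]
    _ ≤ 2 * ((m + 1 + l).choose (m+1)) := by omega
    _ = 2 * ((m + 1 + l).choose l) := by rw [h1]

-- summability base
private lemma sbase : Summable (fun i : ℕ => (((i : ℝ) + 1) ^ 2)⁻¹) := by
  have h : Summable (fun n : ℕ => 1 / (n : ℝ) ^ 2) := Real.summable_one_div_nat_pow.mpr one_lt_two
  have h2 := (summable_nat_add_iff 1).mpr h
  apply h2.congr
  intro i
  push_cast
  rw [one_div]

private lemma sumw (p : ℕ) (hp : 2 ≤ p) : Summable (fun i : ℕ => (((i : ℝ) + 1) ^ p)⁻¹) := by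
  apply Summable.of_nonneg_of_le (fun i => by positivity) _ sbase
  intro i
  apply inv_anti₀ (by positivity)
  apply pow_le_pow_right₀ (by linarith [Nat.cast_nonneg (α := ℝ) i]) hp

private lemma sumG (r j : ℕ) (hr : 1 ≤ r) :
    Summable (fun i : ℕ => (((i : ℝ) + 1) ^ r * (((i : ℝ) + 1) + j))⁻¹) := by
  apply Summable.of_nonneg_of_le (fun i => by positivity) _ sbase
  intro i
  apply inv_anti₀ (by positivity)
  have h0 : (0:ℝ) ≤ (i:ℝ) := Nat.cast_nonneg i
  have h1 : ((i : ℝ) + 1) ≤ ((i : ℝ) + 1) ^ r := le_self_pow₀ (by linarith) (by omega)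
  have h2 : ((i : ℝ) + 1) ≤ ((i : ℝ) + 1) + j := by
    have : (0:ℝ) ≤ (j:ℝ) := Nat.cast_nonneg j
    linarith
  calc ((i : ℝ) + 1) ^ 2 = ((i:ℝ)+1) * ((i:ℝ)+1) := sq _
    _ ≤ (((i : ℝ) + 1) ^ r) * (((i : ℝ) + 1) + j) := by
      apply mul_le_mul h1 h2 (by linarith) (by positivity)

-- partial sums of 1/(i+1)^2 bounded
private lemma psum2 : ∀ n : ℕ, ∑ i ∈ Finset.range n, (((i : ℝ) + 1) ^ 2)⁻¹ ≤ 2 - ((n : ℝ))⁻¹ := by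
  intro n
  induction n with
  | zero => norm_num
  | succ n ih =>
    rw [Finset.sum_range_succ]
    rcases Nat.eq_zero_or_pos n with h0 | h0
    · subst h0; norm_num
    have hn : (1:ℝ) ≤ (n:ℝ) := by exact_mod_cast h0
    have key : (((n : ℝ) + 1) ^ 2)⁻¹ ≤ ((n : ℝ))⁻¹ - ((n : ℝ) + 1)⁻¹ := by
      have h1 : ((n : ℝ))⁻¹ - ((n : ℝ) + 1)⁻¹ = (((n:ℝ)) * ((n:ℝ)+1))⁻¹ := by
        field_simp
        ring
      rw [h1]
      apply inv_anti₀ (by positivity)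
      nlinarith
    push_cast
    linarith

private lemma Hbound (p : ℕ) (hp : 2 ≤ p) (n : ℕ) :
    ∑ i ∈ Finset.range n, (((i : ℝ) + 1) ^ p)⁻¹ ≤ 2 := by
  have h1 : ∑ i ∈ Finset.range n, (((i : ℝ) + 1) ^ p)⁻¹
      ≤ ∑ i ∈ Finset.range n, (((i : ℝ) + 1) ^ 2)⁻¹ := by
    apply Finset.sum_le_sum
    intro i _
    apply inv_anti₀ (by positivity)
    apply pow_le_pow_right₀ (by linarith [Nat.cast_nonneg (α := ℝ) i]) hp
  have h2 := psum2 n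
  have : (0:ℝ) ≤ ((n:ℝ))⁻¹ := by positivity
  linarith


private lemma tsum_pnat' (f : ℕ+ → ℝ) : ∑' (n : ℕ+), f n = ∑' (i : ℕ), f i.succPNat :=
  (Equiv.pnatEquivNat.symm.tsum_eq f).symm

private lemma succPNat_cast (i : ℕ) : ((i.succPNat : ℕ+) : ℝ) = (i : ℝ) + 1 := by
  have : ((i.succPNat : ℕ+) : ℕ) = i + 1 := Nat.succPNat_coe i
  exact_mod_cast this

private lemma zv_eq (p : ℕ) : zv p = ∑' i : ℕ, (((i : ℝ) + 1) ^ p)⁻¹ := by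
  rw [zv, tsum_pnat']
  congr 1
  funext i
  rw [succPNat_cast, zpow_natCast]

private lemma mu_eq (r j : ℕ) :
    mu r j = ∑' i : ℕ, (((i : ℝ) + 1) ^ r * (((i : ℝ) + 1) + j))⁻¹ := by
  rw [mu, tsum_pnat']
  congr 1
  funext i
  rw [succPNat_cast, one_div]

-- summability copies (from part2, assumed available in final file)
private lemma sbase' : Summable (fun i : ℕ => (((i : ℝ) + 1) ^ 2)⁻¹) := by
  have h : Summable (fun n : ℕ => 1 / (n : ℝ) ^ 2) := Real.summable_one_div_nat_pow.mpr one_lt_two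
  have h2 := (summable_nat_add_iff 1).mpr h
  apply h2.congr
  intro i; push_cast; rw [one_div]

private lemma sumw' (p : ℕ) (hp : 2 ≤ p) : Summable (fun i : ℕ => (((i : ℝ) + 1) ^ p)⁻¹) := by
  apply Summable.of_nonneg_of_le (fun i => by positivity) _ sbase'
  intro i
  apply inv_anti₀ (by positivity)
  apply pow_le_pow_right₀ (by linarith [Nat.cast_nonneg (α := ℝ) i]) hp

private lemma sumG' (r j : ℕ) (hr : 1 ≤ r) :
    Summable (fun i : ℕ => (((i : ℝ) + 1) ^ r * (((i : ℝ) + 1) + j))⁻¹) := by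
  apply Summable.of_nonneg_of_le (fun i => by positivity) _ sbase'
  intro i
  apply inv_anti₀ (by positivity)
  have h0 : (0:ℝ) ≤ (i:ℝ) := Nat.cast_nonneg i
  have h1 : ((i : ℝ) + 1) ≤ ((i : ℝ) + 1) ^ r := le_self_pow₀ (by linarith) (by omega)
  have h2 : ((i : ℝ) + 1) ≤ ((i : ℝ) + 1) + j := by
    have : (0:ℝ) ≤ (j:ℝ) := Nat.cast_nonneg j
    linarith
  calc ((i : ℝ) + 1) ^ 2 = ((i:ℝ)+1) * ((i:ℝ)+1) := sq _
    _ ≤ (((i : ℝ) + 1) ^ r) * (((i : ℝ) + 1) + j) := by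
      apply mul_le_mul h1 h2 (by linarith) (by positivity)

private lemma mu_rec (p j : ℕ) (hp : 2 ≤ p) :
    (j : ℝ) * mu p j = zv p - mu (p - 1) j := by
  rw [mu_eq, mu_eq, zv_eq, ← tsum_mul_left,
    ← Summable.tsum_sub (sumw' p hp) (sumG' (p-1) j (by omega))]
  congr 1
  funext i
  have hx : (0:ℝ) < (i:ℝ) + 1 := by positivity
  have hxj : (0:ℝ) < ((i:ℝ) + 1) + j := by
    have : (0:ℝ) ≤ (j:ℝ) := Nat.cast_nonneg j
    linarith
  have hps : p = (p - 1) + 1 := by omega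
  rw [hps]
  rw [pow_succ]
  simp only [Nat.add_sub_cancel]
  have hxp : (0:ℝ) < ((i:ℝ)+1) ^ (p-1) := by positivity
  field_simp
  ring

private lemma one_le_prod_range (f : ℕ → ℝ) (h : ∀ k, 1 ≤ f k) :
    ∀ m : ℕ, 1 ≤ ∏ k ∈ Finset.range m, f k := by
  intro m
  induction m with
  | zero => simp
  | succ m ih =>
    rw [Finset.prod_range_succ]
    nlinarith [h m]

section tail
variable (m : ℕ)

private noncomputable def aa (m i : ℕ) : ℝ := ((((i + m + 3).choose (m + 2) : ℕ) : ℝ))⁻¹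
private noncomputable def bb (m i : ℕ) : ℝ :=
  (((m : ℝ) + 2) / ((m : ℝ) + 1)) * ((((i + m + 2).choose (m + 1) : ℕ) : ℝ))⁻¹

private lemma aa_nonneg (i : ℕ) : 0 ≤ aa m i := by unfold aa; positivity
private lemma bb_nonneg (i : ℕ) : 0 ≤ bb m i := by unfold bb; positivity

private lemma telescope (i : ℕ) : aa m i = bb m i - bb m (i + 1) := by
  have hD := choose_inv (i + 1) (m + 2)
  have hA := choose_inv (i + 1) (m + 1)
  have hB := choose_inv (i + 2) (m + 1)
  push_cast at hD hA hB
  set D := ∏ k ∈ Finset.range (m + 2), ((i : ℝ) + 1 + 1 + k) with hDdef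
  set A := ∏ k ∈ Finset.range (m + 1), ((i : ℝ) + 1 + 1 + k) with hAdef
  set B := ∏ k ∈ Finset.range (m + 1), ((i : ℝ) + 2 + 1 + k) with hBdef
  have hDpos : 0 < D := by rw [hDdef]; apply Finset.prod_pos; intro k _; positivity
  have hApos : 0 < A := by rw [hAdef]; apply Finset.prod_pos; intro k _; positivity
  have hBpos : 0 < B := by rw [hBdef]; apply Finset.prod_pos; intro k _; positivity
  have pcast : ∀ z : ℕ, (((z:ℕ):ℝ)) = (z:ℝ) := fun z => rfl
  have hDA : D = A * ((i:ℝ) + 2 + (m + 1)) := by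
    rw [hDdef, hAdef, Finset.prod_range_succ]
    push_cast; ring_nf
  have hDB : D = ((i:ℝ) + 2) * B := by
    rw [hDdef, hBdef, Finset.prod_range_succ' (fun k => (i : ℝ) + 1 + 1 + k) (m+1)]
    have : ∀ k ∈ Finset.range (m+1), (i : ℝ) + 1 + 1 + ((k+1:ℕ):ℝ)
        = (i : ℝ) + 2 + 1 + (k:ℝ) := by intro k _; push_cast; ring
    rw [Finset.prod_congr rfl this]
    push_cast; ring
  -- rewrite aa, bb via hD, hA, hB
  have haa : aa m i = ((m+2).factorial : ℝ) * D⁻¹ := by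
    unfold aa
    rw [show i + m + 3 = (i + 1) + (m + 2) from by omega]
    push_cast
    rw [hD]
  have hbb1 : bb m i = (((m : ℝ) + 2) / ((m : ℝ) + 1)) * (((m+1).factorial : ℝ) * A⁻¹) := by
    unfold bb
    rw [show i + m + 2 = (i + 1) + (m + 1) from by omega]
    push_cast
    rw [hA]
  have hbb2 : bb m (i+1) = (((m : ℝ) + 2) / ((m : ℝ) + 1)) * (((m+1).factorial : ℝ) * B⁻¹) := by
    unfold bb
    rw [show i + 1 + m + 2 = (i + 2) + (m + 1) from by omega]
    push_cast
    rw [hB]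
  have hAinv : A⁻¹ = ((i:ℝ) + 2 + (m + 1)) * D⁻¹ := by
    rw [hDA, mul_inv]
    field_simp
  have hBinv : B⁻¹ = ((i:ℝ) + 2) * D⁻¹ := by
    rw [hDB, mul_inv]
    field_simp
  rw [haa, hbb1, hbb2, hAinv, hBinv]
  have hfac : ((m+2).factorial : ℝ) = ((m:ℝ) + 2) * ((m+1).factorial : ℝ) := by
    rw [show (m+2) = (m+1)+1 from rfl, Nat.factorial_succ]
    push_cast; ring
  rw [hfac]
  have hm1 : ((m:ℝ) + 1) ≠ 0 := by positivity
  field_simp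
  ring

private lemma bb_tendsto : Tendsto (bb m) atTop (𝓝 0) := by
  have hub : ∀ i : ℕ, bb m i ≤ ((((m : ℝ) + 2) / ((m : ℝ) + 1)) * ((m+1).factorial : ℝ)) * (1 / ((i:ℝ) + 1)) := by
    intro i
    unfold bb
    have hA := choose_inv (i + 1) (m + 1)
    push_cast at hA
    rw [show i + m + 2 = (i + 1) + (m + 1) from by omega]
    push_cast
    rw [hA]
    set A := ∏ k ∈ Finset.range (m + 1), ((i : ℝ) + 1 + 1 + (k:ℝ)) with hAdef
    have hlb : ((i:ℝ) + 1) ≤ A := by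
      have hx : (0:ℝ) ≤ (i:ℝ) := Nat.cast_nonneg i
      have hrest : (1:ℝ) ≤ ∏ k ∈ Finset.range m, ((i : ℝ) + 1 + 1 + ((k:ℕ)+1:ℝ)) := by
        apply one_le_prod_range
        intro k
        have : (0:ℝ) ≤ (k:ℝ) := Nat.cast_nonneg k
        linarith
      have hsp := Finset.prod_range_succ' (fun k : ℕ => (i : ℝ) + 1 + 1 + (k:ℝ)) m
      rw [hAdef, hsp]
      have hcongr : ∀ k ∈ Finset.range m, (i : ℝ) + 1 + 1 + (((k+1):ℕ):ℝ)
          = (i : ℝ) + 1 + 1 + ((k:ℕ)+1:ℝ) := by intro k _; push_cast; ring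
      rw [Finset.prod_congr rfl hcongr]
      have : ((i:ℝ) + 1 + 1 + ((0:ℕ):ℝ)) = (i:ℝ) + 2 := by push_cast; ring
      rw [this]
      nlinarith
    have hApos : (0:ℝ) < A := by
      have : (0:ℝ) < (i:ℝ) + 1 := by positivity
      linarith
    have hAinv : A⁻¹ ≤ ((i:ℝ) + 1)⁻¹ := by
      apply inv_anti₀ (by positivity) hlb
    have hc : (0:ℝ) ≤ (((m : ℝ) + 2) / ((m : ℝ) + 1)) * ((m+1).factorial : ℝ) := by positivity
    calc (((m : ℝ) + 2) / ((m : ℝ) + 1)) * (((m+1).factorial : ℝ) * A⁻¹)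
        = ((((m : ℝ) + 2) / ((m : ℝ) + 1)) * ((m+1).factorial : ℝ)) * A⁻¹ := by ring
      _ ≤ ((((m : ℝ) + 2) / ((m : ℝ) + 1)) * ((m+1).factorial : ℝ)) * ((i:ℝ) + 1)⁻¹ := by
          apply mul_le_mul_of_nonneg_left hAinv hc
      _ = ((((m : ℝ) + 2) / ((m : ℝ) + 1)) * ((m+1).factorial : ℝ)) * (1 / ((i:ℝ) + 1)) := by
          rw [one_div]
  apply squeeze_zero (fun i => bb_nonneg m i) hub
  have := tendsto_one_div_add_atTop_nhds_zero_nat.const_mul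
    ((((m : ℝ) + 2) / ((m : ℝ) + 1)) * ((m+1).factorial : ℝ))
  simpa using this

private lemma tail_hasSum (i : ℕ) : HasSum (fun k => aa m (k + i)) (bb m i) := by
  rw [hasSum_iff_tendsto_nat_of_nonneg (fun k => aa_nonneg m (k + i))]
  have hps : ∀ N : ℕ, ∑ k ∈ Finset.range N, aa m (k + i) = bb m i - bb m (N + i) := by
    intro N
    have : ∀ k ∈ Finset.range N, aa m (k + i) = bb m (k + i) - bb m ((k + i) + 1) :=
      fun k _ => telescope m (k + i)
    rw [Finset.sum_congr rfl this]
    have := Finset.sum_range_sub' (fun k => bb m (k + i)) N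
    simp only [zero_add] at this
    rw [show (∑ k ∈ Finset.range N, (bb m (k + i) - bb m (k + i + 1)))
        = ∑ k ∈ Finset.range N, ((fun k => bb m (k + i)) k - (fun k => bb m (k + i)) (k+1)) from by
          apply Finset.sum_congr rfl; intro k _; simp only []; rw [show k + 1 + i = k + i + 1 from by omega]]
    rw [this]
  simp only [hps]
  have h2 : Tendsto (fun N : ℕ => bb m (N + i)) atTop (𝓝 0) :=
    (bb_tendsto m).comp (tendsto_add_atTop_nat i)
  have := h2.const_sub (bb m i)
  simpa using this

private lemma aa_summable : Summable (aa m) := by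
  have := (tail_hasSum m 0).summable
  simpa using this

private lemma tail_tsum (i : ℕ) :
    ∑' k : ℕ, (if i ≤ k then aa m k else 0) = bb m i := by
  have hs : Summable (fun k => if i ≤ k then aa m k else 0) := by
    apply Summable.of_nonneg_of_le _ _ (aa_summable m)
    · intro k; by_cases h : i ≤ k <;> simp [h, aa_nonneg]
    · intro k; by_cases h : i ≤ k <;> simp [h, aa_nonneg]
  have key := Summable.sum_add_tsum_nat_add (f := fun k => if i ≤ k then aa m k else 0) i hs
  have h1 : ∑ k ∈ Finset.range i, (if i ≤ k then aa m k else 0) = 0 := by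
    apply Finset.sum_eq_zero
    intro k hk
    rw [Finset.mem_range] at hk
    rw [if_neg (by omega)]
  have h2 : ∀ k : ℕ, (if i ≤ k + i then aa m (k + i) else 0) = aa m (k + i) := by
    intro k; rw [if_pos (by omega)]
  rw [h1, zero_add] at key
  rw [← key]
  simp only [h2]
  exact (tail_hasSum m i).tsum_eq
end tail

private lemma gH_eq (p n : ℕ) : gH ↑p n = ∑ k ∈ Finset.range n, (((k : ℝ) + 1) ^ p)⁻¹ := by
  unfold gH
  rw [sum_Icc_shift (fun k => (((k:ℕ) : ℝ) ^ (p:ℤ))⁻¹) n]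
  apply Finset.sum_congr rfl
  intro k _
  rw [zpow_natCast]
  push_cast
  ring_nf

private noncomputable def FF (p m : ℕ) : ℕ × ℕ → ℝ :=
  fun q => if q.2 ≤ q.1 then (((q.2 : ℝ) + 1) ^ p)⁻¹ * aa m q.1 else 0

private lemma FF_apply (p m i k : ℕ) :
    FF p m (i, k) = if k ≤ i then (((k : ℝ) + 1) ^ p)⁻¹ * aa m i else 0 := rfl

private lemma FF_nonneg' (p m : ℕ) (q : ℕ × ℕ) : 0 ≤ FF p m q := by
  obtain ⟨i, k⟩ := q
  rw [FF_apply]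
  by_cases h : k ≤ i
  · rw [if_pos h]
    have := aa_nonneg m i
    positivity
  · rw [if_neg h]

private lemma FF_nonneg (p m : ℕ) : 0 ≤ FF p m := by
  intro q
  simpa using FF_nonneg' p m q

private lemma FF_inner (p m i : ℕ) :
    ∑' k : ℕ, FF p m (i, k) = (∑ k ∈ Finset.range (i+1), (((k : ℝ) + 1) ^ p)⁻¹) * aa m i := by
  rw [tsum_eq_sum (s := Finset.range (i+1)) (f := fun k => FF p m (i, k)) ?_]
  · rw [Finset.sum_mul]
    apply Finset.sum_congr rfl
    intro k hk
    rw [Finset.mem_range] at hk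
    rw [FF_apply, if_pos (by omega)]
  · intro k hk
    rw [Finset.mem_range] at hk
    show FF p m (i, k) = 0
    rw [FF_apply, if_neg (by omega)]
private lemma aa_le (m i : ℕ) : aa m i ≤ 4 * (((i : ℝ) + 1) ^ 2)⁻¹ := by
  unfold aa
  have h1 := choose_lb i (m + 2) (by omega)
  have h2 : ((i + 1) * (i + 2) : ℕ) ≤ 2 * ((i + m + 3).choose (m + 2)) := by
    rw [show i + 1 + (m + 2) = i + m + 3 from by omega] at h1
    exact h1
  have h3 : ((i:ℝ) + 1) * ((i:ℝ) + 2) ≤ 2 * (((i + m + 3).choose (m + 2) : ℕ) : ℝ) := by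
    exact_mod_cast h2
  have hpos : (0:ℝ) < (((i + m + 3).choose (m + 2) : ℕ) : ℝ) := by
    exact_mod_cast Nat.choose_pos (by omega : m + 2 ≤ i + m + 3)
  have hx : (0:ℝ) ≤ (i:ℝ) := Nat.cast_nonneg i
  rw [show (4 : ℝ) * (((i : ℝ) + 1) ^ 2)⁻¹ = 2 * (2 * ((((i:ℝ)+1)^2)⁻¹)) from by ring]
  have key : (((i + m + 3).choose (m + 2) : ℕ) : ℝ)⁻¹ ≤ 2 * (((i:ℝ)+1) * ((i:ℝ)+2))⁻¹ := by
    rw [show (2:ℝ) * (((i:ℝ)+1) * ((i:ℝ)+2))⁻¹ = ((((i:ℝ)+1) * ((i:ℝ)+2)) / 2)⁻¹ from by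
      rw [inv_div]; ring]
    apply inv_anti₀ (by positivity)
    linarith
  calc (((i + m + 3).choose (m + 2) : ℕ) : ℝ)⁻¹ ≤ 2 * (((i:ℝ)+1) * ((i:ℝ)+2))⁻¹ := key
    _ ≤ 2 * (2 * ((((i:ℝ)+1)^2)⁻¹)) := by
        have : (((i:ℝ)+1) * ((i:ℝ)+2))⁻¹ ≤ ((((i:ℝ)+1)^2))⁻¹ := by
          apply inv_anti₀ (by positivity)
          nlinarith
        have h2' : (0:ℝ) ≤ ((((i:ℝ)+1)^2))⁻¹ := by positivity
        nlinarith

private lemma FF_summable (p m : ℕ) (hp : 2 ≤ p) : Summable (FF p m) := by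
  rw [summable_prod_of_nonneg (FF_nonneg p m)]
  constructor
  · intro i
    apply summable_of_ne_finset_zero (s := Finset.range (i+1))
    intro k hk
    rw [Finset.mem_range] at hk
    show FF p m (i, k) = 0
    rw [FF_apply, if_neg (by omega)]
  · apply Summable.of_nonneg_of_le _ _ (sbase'.mul_left 8)
    · intro i
      apply tsum_nonneg
      intro k
      exact FF_nonneg p m (i, k)
    · intro i
      rw [FF_inner p m i]
      have hH : (∑ k ∈ Finset.range (i+1), (((k : ℝ) + 1) ^ p)⁻¹) ≤ 2 := Hbound p hp (i+1)
      have hHn : 0 ≤ (∑ k ∈ Finset.range (i+1), (((k : ℝ) + 1) ^ p)⁻¹) := by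
        apply Finset.sum_nonneg; intro k _; positivity
      have haa := aa_le m i
      have haan := aa_nonneg m i
      have h2 : (0:ℝ) ≤ (((i : ℝ) + 1) ^ 2)⁻¹ := by positivity
      calc (∑ k ∈ Finset.range (i+1), (((k : ℝ) + 1) ^ p)⁻¹) * aa m i
          ≤ 2 * (4 * (((i : ℝ) + 1) ^ 2)⁻¹) := by nlinarith
        _ = 8 * (((i : ℝ) + 1) ^ 2)⁻¹ := by ring


private lemma row_expand (p m : ℕ) (hp : 2 ≤ p) (k : ℕ) :
    (((k:ℝ)+1)^p)⁻¹ * bb m k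
      = (((m:ℝ)+2)/((m:ℝ)+1)) * ((((k:ℝ)+1)^p)⁻¹
          + ∑ j ∈ Finset.range (m+1), (-1:ℝ)^(j+1) * (((m+1).choose (j+1) : ℕ) : ℝ)
              * ((((k:ℝ)+1)^(p-1)) * (((k:ℝ)+1) + ((j+1:ℕ):ℝ)))⁻¹) := by
  have hx : (0:ℝ) < (k:ℝ)+1 := by positivity
  have hA := choose_inv (k + 1) (m + 1)
  push_cast at hA
  unfold bb
  rw [show k + m + 2 = (k+1) + (m+1) from by omega]
  push_cast
  rw [hA]
  set x : ℝ := (k:ℝ) + 1 with hxdef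
  set A := ∏ t ∈ Finset.range (m + 1), ((k:ℝ) + 1 + 1 + (t:ℝ)) with hAdef
  have hApos : 0 < A := by rw [hAdef]; apply Finset.prod_pos; intro t _; positivity
  have hxA : ∏ t ∈ Finset.range (m+2), (x + (t:ℝ)) = A * x := by
    rw [Finset.prod_range_succ' (fun t : ℕ => x + (t:ℝ)) (m+1), hAdef]
    have : ∀ t ∈ Finset.range (m+1), x + (((t+1):ℕ):ℝ) = (k:ℝ) + 1 + 1 + (t:ℝ) := by
      intro t _; rw [hxdef]; push_cast; ring
    rw [Finset.prod_congr rfl this]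
    push_cast
    ring
  have hAinv : A⁻¹ = x * (∏ t ∈ Finset.range (m+2), (x + (t:ℝ)))⁻¹ := by
    rw [hxA, mul_inv]
    field_simp
  set T := ∑ j ∈ Finset.range (m+1), (-1:ℝ)^(j+1) * (((m+1).choose (j+1) : ℕ) : ℝ)
      * (x + ((j:ℝ)+1))⁻¹ with hTdef
  have hshift : ∑ j ∈ Finset.range (m+2), (-1:ℝ)^j * (((m+1).choose j : ℕ) : ℝ) * (x + (j:ℝ))⁻¹
      = T + x⁻¹ := by
    rw [Finset.sum_range_succ' (fun j => (-1:ℝ)^j * (((m+1).choose j : ℕ) : ℝ) * (x + (j:ℝ))⁻¹) (m+1)]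
    congr 1
    · rw [hTdef]
      apply Finset.sum_congr rfl
      intro j _
      push_cast
      ring
    · simp
  have hpf' : (∏ t ∈ Finset.range (m+2), (x + (t:ℝ)))⁻¹
      = ((((m+1).factorial : ℕ)):ℝ)⁻¹ * (T + x⁻¹) := by
    rw [pf (m+1) x hx, hshift]
  have hsum : ∑ j ∈ Finset.range (m+1), (-1:ℝ)^(j+1) * (((m+1).choose (j+1) : ℕ) : ℝ)
        * (((x)^(p-1)) * (x + ((j:ℝ)+1)))⁻¹ = (x^(p-1))⁻¹ * T := by
    rw [hTdef, Finset.mul_sum]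
    apply Finset.sum_congr rfl
    intro j _
    rw [mul_inv]
    ring
  have hxp : x ^ p = x ^ (p-1) * x := by
    rw [← pow_succ]
    congr 1
    omega
  have hxp1 : (0:ℝ) < x ^ (p-1) := by positivity
  have hfac : (0:ℝ) < (((m+1).factorial : ℕ) : ℝ) := by exact_mod_cast (m+1).factorial_pos
  rw [hAinv, hpf', hsum, hxp]
  have hm1 : ((m:ℝ)+1) ≠ 0 := by positivity
  field_simp
  ring

private lemma halt (m : ℕ) :
    ∑ j ∈ Finset.range (m+1), (-1:ℝ)^(j+1) * (((m+1).choose (j+1) : ℕ) : ℝ) = -1 := by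
  have hInt : ∑ j ∈ Finset.range (m+2), (-1:ℤ)^j * ((m+1).choose j : ℤ) = 0 :=
    Int.alternating_sum_range_choose_of_ne (by omega)
  have hR : ∑ j ∈ Finset.range (m+2), (-1:ℝ)^j * (((m+1).choose j : ℕ) : ℝ) = 0 := by
    exact_mod_cast hInt
  rw [Finset.sum_range_succ' (fun j => (-1:ℝ)^j * (((m+1).choose j : ℕ) : ℝ)) (m+1)] at hR
  simp only [pow_zero, Nat.choose_zero_right, Nat.cast_one, one_mul, mul_one] at hR
  linarith

end Aux14

/-- `∑_{n≥1} H_n^{(p)}/C(n+l,l)` in terms of `ζ(p)` and `μ` values. -/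
theorem stmt_14 (p l : ℕ) (hp : 2 ≤ p) (hl : 1 < l) :
    ∑' n : ℕ+, gH p n / ((((n : ℕ) + l).choose l : ℕ) : ℝ)
      = zv p
        + ∑ j ∈ Finset.Icc 1 (l - 1), (-1 : ℝ) ^ j *
            (((l - 1).choose j : ℝ) * mu (p - 1) j - ((l - 2).choose (j - 1) : ℝ) * mu p j) := by
  obtain ⟨m, rfl⟩ : ∃ m, l = m + 2 := ⟨l - 2, by omega⟩
  have hm1 : ((m:ℝ) + 1) ≠ 0 := by positivity
  -- Step 1: move to ℕ-indexed double sum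
  have hL1 : (∑' n : ℕ+, gH p n / ((((n : ℕ) + (m+2)).choose (m+2) : ℕ) : ℝ))
      = ∑' i : ℕ, ∑' k : ℕ, FF p m (i, k) := by
    rw [tsum_pnat' (fun n : ℕ+ => gH p n / ((((n : ℕ) + (m+2)).choose (m+2) : ℕ) : ℝ))]
    apply tsum_congr
    intro i
    rw [FF_inner p m i]
    rw [show ((i.succPNat : ℕ)) = i + 1 from Nat.succPNat_coe i]
    rw [gH_eq, div_eq_mul_inv]
    unfold aa
    rw [show i + 1 + (m+2) = i + m + 3 from by omega]
  -- Step 2: swap the double sum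
  have hswap : (∑' i : ℕ, ∑' k : ℕ, FF p m (i, k)) = ∑' k : ℕ, ∑' i : ℕ, FF p m (i, k) :=
    (Summable.tsum_comm (f := fun i k => FF p m (i, k)) (FF_summable p m hp)).symm
  -- Step 3: rows
  have hrow : ∀ k : ℕ, (∑' i : ℕ, FF p m (i, k)) = (((k:ℝ)+1)^p)⁻¹ * bb m k := by
    intro k
    have hc : ∀ i : ℕ, FF p m (i, k) = (((k:ℝ)+1)^p)⁻¹ * (if k ≤ i then aa m i else 0) := by
      intro i
      rw [FF_apply]
      by_cases h : k ≤ i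
      · rw [if_pos h, if_pos h]
      · rw [if_neg h, if_neg h, mul_zero]
    rw [tsum_congr hc, tsum_mul_left, tail_tsum m k]
  -- Step 4: expand rows via partial fractions and sum
  have hexp : (∑' k : ℕ, (((k:ℝ)+1)^p)⁻¹ * bb m k)
      = (((m:ℝ)+2)/((m:ℝ)+1)) * (zv p
          + ∑ j ∈ Finset.range (m+1), (-1:ℝ)^(j+1) * (((m+1).choose (j+1) : ℕ) : ℝ)
              * mu (p-1) (j+1)) := by
    rw [tsum_congr (fun k => row_expand p m hp k), tsum_mul_left]
    congr 1
    have hs1 : Summable (fun k : ℕ => (((k:ℝ)+1)^p)⁻¹) := sumw' p hp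
    have hs2 : ∀ j ∈ Finset.range (m+1), Summable (fun k : ℕ =>
        (-1:ℝ)^(j+1) * (((m+1).choose (j+1) : ℕ) : ℝ)
          * ((((k:ℝ)+1)^(p-1)) * (((k:ℝ)+1) + ((j+1:ℕ):ℝ)))⁻¹) := by
      intro j _
      exact (sumG' (p-1) (j+1) (by omega)).mul_left _
    have hs3 : Summable (fun k : ℕ => ∑ j ∈ Finset.range (m+1),
        (-1:ℝ)^(j+1) * (((m+1).choose (j+1) : ℕ) : ℝ)
          * ((((k:ℝ)+1)^(p-1)) * (((k:ℝ)+1) + ((j+1:ℕ):ℝ)))⁻¹) :=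
      summable_sum hs2
    rw [Summable.tsum_add hs1 hs3, Summable.tsum_finsetSum hs2]
    congr 1
    · exact (zv_eq p).symm
    · apply Finset.sum_congr rfl
      intro j _
      rw [tsum_mul_left]
      congr 1
      exact (mu_eq (p-1) (j+1)).symm
  rw [hL1, hswap, tsum_congr hrow, hexp]
  -- Step 5: RHS algebra
  rw [show m + 2 - 1 = m + 1 from by omega, show m + 2 - 2 = m from by omega]
  rw [sum_Icc_shift (fun j => (-1 : ℝ) ^ j *
      (((m+1).choose j : ℝ) * mu (p - 1) j - (m.choose (j - 1) : ℝ) * mu p j)) (m+1)]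
  have hper : ∀ j ∈ Finset.range (m+1),
      (-1 : ℝ) ^ (j+1) * (((m+1).choose (j+1) : ℝ) * mu (p - 1) (j+1)
          - (m.choose ((j+1) - 1) : ℝ) * mu p (j+1))
      = (1 + ((m:ℝ)+1)⁻¹) * ((-1:ℝ)^(j+1) * (((m+1).choose (j+1) : ℕ) : ℝ) * mu (p-1) (j+1))
        - (((m:ℝ)+1)⁻¹ * zv p) * ((-1:ℝ)^(j+1) * (((m+1).choose (j+1) : ℕ) : ℝ)) := by
    intro j _
    rw [show (j+1) - 1 = j from by omega]
    have hch : ((m:ℝ)+1) * ((m.choose j : ℕ):ℝ) = (((m+1).choose (j+1):ℕ):ℝ) * ((j:ℝ)+1) := by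
      exact_mod_cast Nat.add_one_mul_choose_eq m j
    have hmu : ((j:ℝ)+1) * mu p (j+1) = zv p - mu (p-1) (j+1) := by
      have h := mu_rec p (j+1) hp
      push_cast at h
      exact h
    have key : ((m:ℝ)+1) * (((m.choose j : ℕ):ℝ) * mu p (j+1))
        = (((m+1).choose (j+1):ℕ):ℝ) * (zv p - mu (p-1) (j+1)) := by
      calc ((m:ℝ)+1) * (((m.choose j : ℕ):ℝ) * mu p (j+1))
          = (((m:ℝ)+1) * ((m.choose j : ℕ):ℝ)) * mu p (j+1) := by ring
        _ = ((((m+1).choose (j+1):ℕ):ℝ) * ((j:ℝ)+1)) * mu p (j+1) := by rw [hch]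
        _ = (((m+1).choose (j+1):ℕ):ℝ) * (((j:ℝ)+1) * mu p (j+1)) := by ring
        _ = _ := by rw [hmu]
    have hxx : ((m.choose j : ℕ):ℝ) * mu p (j+1)
        = ((m:ℝ)+1)⁻¹ * ((((m+1).choose (j+1):ℕ):ℝ) * (zv p - mu (p-1) (j+1))) := by
      rw [← key]
      field_simp
    rw [hxx]
    ring
  rw [Finset.sum_congr rfl hper, Finset.sum_sub_distrib, ← Finset.mul_sum, ← Finset.mul_sum,
    halt m]
  field_simp
  ring
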